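/- Let A₀, …, A_{m−1} ∈ M_n(ℚ) be matrices such that some ℚ-linear combination of them is invertible. Then there exist integers x₀, …, x_{m−1} with |x_i| ≤ n such that Σ_i x_i A_i is invertible. -/

import Mathlib

open MvPolynomial Polynomial

lemma single_var_box (n : ℕ) (φ : Polynomial ℚ) (h0 : φ ≠ 0) (hd : φ.natDegree ≤ n) :
    ∃ k : ℕ, k ≤ n ∧ φ.eval (k : ℚ) ≠ 0 := by
  by_contra hc
  push_neg at hc
  have hsub : (Finset.range (n+1)).image (Nat.cast : ℕ → ℚ) ⊆ φ.roots.toFinset := by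
    intro a ha
    simp only [Finset.mem_image, Finset.mem_range] at ha
    obtain ⟨k, hk, rfl⟩ := ha
    rw [Multiset.mem_toFinset, Polynomial.mem_roots h0]
    exact hc k (Nat.lt_succ_iff.mp hk)
  have h1 : n + 1 ≤ φ.roots.toFinset.card := by
    calc n + 1 = ((Finset.range (n+1)).image (Nat.cast : ℕ → ℚ)).card := by
          rw [Finset.card_image_of_injective _ Nat.cast_injective, Finset.card_range]
      _ ≤ _ := Finset.card_le_card hsub
  have h2 : φ.roots.toFinset.card ≤ φ.natDegree :=
    le_trans (Multiset.toFinset_card_le _) φ.card_roots'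
  omega

lemma mv_box (n : ℕ) : ∀ (m : ℕ) (p : MvPolynomial (Fin m) ℚ), p ≠ 0 →
    (∀ i, p.degreeOf i ≤ n) →
    ∃ x : Fin m → ℕ, (∀ i, x i ≤ n) ∧ MvPolynomial.eval (fun i => (x i : ℚ)) p ≠ 0 := by
  intro m
  induction m with
  | zero =>
    intro p hp _
    refine ⟨fun _ => 0, fun i => i.elim0, fun hev => hp ?_⟩
    have h0 : (fun i : Fin 0 => ((0 : ℕ) : ℚ)) = (0 : Fin 0 → ℚ) := funext fun i => i.elim0
    rw [h0, MvPolynomial.eval_zero] at hev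
    ext d
    rw [MvPolynomial.constantCoeff_eq] at hev
    simpa only [Subsingleton.elim d 0, MvPolynomial.coeff_zero] using hev
  | succ N IH =>
    intro p hp hdeg
    set q := MvPolynomial.finSuccEquiv ℚ N p with hq
    have hq0 : q ≠ 0 := by
      simpa [hq] using (MvPolynomial.finSuccEquiv ℚ N).injective.ne hp
    have hqdeg : q.natDegree ≤ n := by
      rw [hq, natDegree_finSuccEquiv]; exact hdeg 0
    have hlc : q.coeff q.natDegree ≠ 0 := Polynomial.leadingCoeff_ne_zero.mpr hq0
    have hlcdeg : ∀ j : Fin N, (q.coeff q.natDegree).degreeOf j ≤ n := fun j =>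
      le_trans (degreeOf_coeff_finSuccEquiv p j q.natDegree) (hdeg j.succ)
    obtain ⟨y, hy, hye⟩ := IH (q.coeff q.natDegree) hlc hlcdeg
    set φ := q.map (MvPolynomial.eval (fun i => (y i : ℚ))) with hφ
    have hφ0 : φ ≠ 0 := fun hz => hye <| by
      have := congrArg (fun ψ => ψ.coeff q.natDegree) hz
      simpa [hφ, Polynomial.coeff_map] using this
    have hφdeg : φ.natDegree ≤ n := le_trans Polynomial.natDegree_map_le hqdeg
    obtain ⟨k, hk, hke⟩ := single_var_box n φ hφ0 hφdeg
    refine ⟨Fin.cons k y, ?_, ?_⟩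
    · intro i
      refine Fin.cases ?_ ?_ i
      · simpa using hk
      · intro j; simpa using hy j
    · have hfun : (fun i => ((Fin.cons k y : Fin (N+1) → ℕ) i : ℚ))
          = Fin.cons (k : ℚ) (fun i => (y i : ℚ)) := by
        funext i
        refine Fin.cases rfl (fun j => rfl) i
      rw [hfun, MvPolynomial.eval_eq_eval_mv_eval']
      exact hke

theorem exists_small_integer_combination_invertible (n m : ℕ)
    (A : Fin m → Matrix (Fin n) (Fin n) ℚ)
    (h : ∃ c : Fin m → ℚ, (∑ i, c i • A i).det ≠ 0) :
    ∃ x : Fin m → ℤ, (∀ i, |x i| ≤ (n : ℤ)) ∧ (∑ i, (x i : ℚ) • A i).det ≠ 0 := by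
  obtain ⟨c, hc⟩ := h
  set M : Matrix (Fin n) (Fin n) (MvPolynomial (Fin m) ℚ) :=
    ∑ i, MvPolynomial.X (R := ℚ) i • (A i).map (MvPolynomial.C (σ := Fin m)) with hM
  set p := M.det with hp
  have key : ∀ d : Fin m → ℚ, MvPolynomial.eval d p = (∑ i, d i • A i).det := by
    intro d
    rw [hp, RingHom.map_det]
    congr 1
    ext j k
    simp [hM, Matrix.sum_apply, Matrix.map_apply, RingHom.mapMatrix_apply]
  have hentry : ∀ j k, (M j k).totalDegree ≤ 1 := by
    intro j k
    rw [hM]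
    simp only [Matrix.sum_apply, Matrix.smul_apply, Matrix.map_apply, smul_eq_mul]
    refine le_trans (MvPolynomial.totalDegree_finset_sum _ _) ?_
    refine Finset.sup_le fun i _ => ?_
    refine le_trans (MvPolynomial.totalDegree_mul _ _) ?_
    simp [MvPolynomial.totalDegree_X, MvPolynomial.totalDegree_C]
  have hptd : p.totalDegree ≤ n := by
    rw [hp, Matrix.det_apply]
    refine le_trans (MvPolynomial.totalDegree_finset_sum _ _) ?_
    refine Finset.sup_le fun σ _ => ?_
    have hsm : (Equiv.Perm.sign σ • ∏ i, M (σ i) i).totalDegree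
        ≤ (∏ i, M (σ i) i).totalDegree := by
      rcases Int.units_eq_one_or (Equiv.Perm.sign σ) with hs | hs <;>
        simp [hs, MvPolynomial.totalDegree_neg]
    refine le_trans hsm ?_
    refine le_trans (MvPolynomial.totalDegree_finset_prod _ _) ?_
    calc ∑ i, (M (σ i) i).totalDegree ≤ ∑ _i : Fin n, 1 :=
          Finset.sum_le_sum fun i _ => hentry (σ i) i
      _ = n := by simp
  have hp0 : p ≠ 0 := fun hz => hc (by rw [← key c, hz, map_zero])
  obtain ⟨x, hx, hxe⟩ := mv_box n m p hp0
    (fun i => le_trans (MvPolynomial.degreeOf_le_totalDegree p i) hptd)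
  refine ⟨fun i => (x i : ℤ), fun i => ?_, ?_⟩
  · rw [abs_of_nonneg (Int.natCast_nonneg _)]
    exact_mod_cast hx i
  · have h2 := hxe
    rw [key] at h2
    have h3 : (fun i => ((x i : ℤ) : ℚ)) = fun i => ((x i : ℕ) : ℚ) := by
      funext i; push_cast; ring
    show (∑ i, ((fun i => ((x i : ℤ) : ℚ)) i) • A i).det ≠ 0
    rw [h3]
    exact h2
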